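/- arXiv:1705.11107 — 2 statements merged into one kernel-verified Lean document; each statement's English description precedes it below -/
import Mathlib

section
/- Let s ≥ 1 and for every nonempty subset A ⊆ [s] let T^A be a centered real tensor indexed by ∏_{i∈A}[d_i]. Define T(a₁,…,a_s) = ∑_{∅≠A⊆[s]} T^A((a_i)_{i∈A}) and suppose every entry of T is bounded in absolute value by μ. Then for every nonempty A ⊆ [s] with |A| = ℓ, every entry of T^A is bounded in absolute value by μ·ℓ^ℓ. -/
open Finset

private lemma binom_aux {α : Type*} [DecidableEq α] (A : Finset α) (x : ℝ) :
    ∑ B ∈ A.powerset, x ^ B.card = (x + 1) ^ A.card := by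
  induction A using Finset.induction_on with
  | empty => simp
  | insert _ _ ha ih =>
    rename_i a A
    rw [Finset.sum_powerset_insert ha]
    have h1 : ∑ B ∈ A.powerset, x ^ (insert a B).card
        = ∑ B ∈ A.powerset, x * x ^ B.card := by
      refine Finset.sum_congr rfl fun B hB => ?_
      rw [Finset.card_insert_of_notMem fun h => ha (Finset.mem_powerset.mp hB h)]
      ring
    rw [h1, ← Finset.mul_sum, ih, Finset.card_insert_of_notMem ha]
    ring

theorem stmt_12 (s : ℕ) (hs : 0 < s) (d : Fin s → ℕ) (hd : ∀ i, 0 < d i)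
    (TA : Finset (Fin s) → (∀ i : Fin s, Fin (d i)) → ℝ) (μ : ℝ)
    (hdep : ∀ (A : Finset (Fin s)) (a b : ∀ i : Fin s, Fin (d i)),
      (∀ i ∈ A, a i = b i) → TA A a = TA A b)
    (hcent : ∀ (A : Finset (Fin s)), ∀ i ∈ A, ∀ a : ∀ j : Fin s, Fin (d j),
      ∑ x : Fin (d i), TA A (Function.update a i x) = 0)
    (hT : ∀ a : ∀ i : Fin s, Fin (d i),
      |∑ A ∈ Finset.univ.filter (fun A : Finset (Fin s) => A.Nonempty), TA A a| ≤ μ) :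
    ∀ A : Finset (Fin s), A.Nonempty →
      ∀ a : ∀ i : Fin s, Fin (d i), |TA A a| ≤ μ * (A.card : ℝ) ^ (A.card : ℕ) := by
  classical
  have hμ : 0 ≤ μ := le_trans (abs_nonneg _) (hT fun i => ⟨0, hd i⟩)
  -- Key averaging bound
  have key : ∀ (A : Finset (Fin s)) (a : ∀ i, Fin (d i)),
      |∑ B ∈ A.powerset.filter (fun B => B.Nonempty), TA B a| ≤ μ := by
    intro A a
    set S : Finset (∀ i, Fin (d i)) :=
      Finset.univ.filter (fun b => ∀ i ∈ A, b i = a i) with hSdef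
    have haS : a ∈ S := by simp [hSdef]
    have hScard : 0 < S.card := Finset.card_pos.mpr ⟨a, haS⟩
    have hvanish : ∀ B : Finset (Fin s), ¬ B ⊆ A → ∑ b ∈ S, TA B b = 0 := by
      intro B hBA
      obtain ⟨i, hiB, hiA⟩ : ∃ i ∈ B, i ∉ A := by
        by_contra h
        push_neg at h
        exact hBA h
      have hmaps : ∀ b ∈ S, Function.update b i (a i) ∈ S := by
        intro b hb
        simp only [hSdef, Finset.mem_filter, Finset.mem_univ, true_and] at hb ⊢
        intro j hj
        have hji : j ≠ i := by rintro rfl; exact hiA hj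
        rw [Function.update_of_ne hji]
        exact hb j hj
      rw [← Finset.sum_fiberwise_of_maps_to hmaps (TA B)]
      refine Finset.sum_eq_zero fun c hc => ?_
      by_cases hci : c i = a i
      · rw [← hcent B i hiB c]
        refine Finset.sum_nbij' (fun b => b i) (fun x => Function.update c i x)
          ?_ ?_ ?_ ?_ ?_
        · intro b _; exact Finset.mem_univ _
        · intro x _
          simp only [hSdef, Finset.mem_filter, Finset.mem_univ, true_and] at hc ⊢
          refine ⟨fun j hj => ?_, ?_⟩
          · have hji : j ≠ i := by rintro rfl; exact hiA hj
            rw [Function.update_of_ne hji]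
            exact hc j hj
          · rw [Function.update_idem, ← hci, Function.update_eq_self]
        · intro b hb
          simp only [Finset.mem_filter] at hb
          show Function.update c i (b i) = b
          funext j
          by_cases hj : j = i
          · subst hj; simp
          · rw [Function.update_of_ne hj]
            have := congrFun hb.2 j
            rw [Function.update_of_ne hj] at this
            exact this.symm
        · intro x _
          simp
        · intro b hb
          simp only [Finset.mem_filter] at hb
          show TA B b = TA B (Function.update c i (b i))
          congr 1
          funext j
          by_cases hj : j = i
          · subst hj; simp
          · rw [Function.update_of_ne hj]
            have := congrFun hb.2 j
            rw [Function.update_of_ne hj] at this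
            exact this
      · have hempty : S.filter (fun b => Function.update b i (a i) = c) = ∅ := by
          refine Finset.filter_eq_empty_iff.mpr fun b _ => fun h => hci ?_
          rw [← h]
          simp
        rw [hempty, Finset.sum_empty]
    have hsub : ∀ B : Finset (Fin s), B ⊆ A →
        ∑ b ∈ S, TA B b = (S.card : ℝ) * TA B a := by
      intro B hBA
      have : ∀ b ∈ S, TA B b = TA B a := by
        intro b hb
        simp only [hSdef, Finset.mem_filter, Finset.mem_univ, true_and] at hb
        exact hdep B b a fun i hi => hb i (hBA hi)
      rw [Finset.sum_congr rfl this, Finset.sum_const, nsmul_eq_mul]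
    have hsplit : ∑ b ∈ S, ∑ B ∈ Finset.univ.filter (fun B : Finset (Fin s) => B.Nonempty), TA B b
        = (S.card : ℝ) * ∑ B ∈ A.powerset.filter (fun B => B.Nonempty), TA B a := by
      rw [Finset.sum_comm]
      have step : ∀ B ∈ Finset.univ.filter (fun B : Finset (Fin s) => B.Nonempty),
          ∑ b ∈ S, TA B b = if B ⊆ A then (S.card : ℝ) * TA B a else 0 := by
        intro B _
        by_cases h : B ⊆ A
        · rw [if_pos h]; exact hsub B h
        · rw [if_neg h]; exact hvanish B h
      rw [Finset.sum_congr rfl step, ← Finset.sum_filter, Finset.mul_sum]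
      refine Finset.sum_congr ?_ fun _ _ => rfl
      ext B
      simp only [Finset.mem_filter, Finset.mem_univ, true_and, Finset.mem_powerset]
      tauto
    have hbound : |∑ b ∈ S, ∑ B ∈ Finset.univ.filter
        (fun B : Finset (Fin s) => B.Nonempty), TA B b| ≤ (S.card : ℝ) * μ := by
      calc |∑ b ∈ S, ∑ B ∈ Finset.univ.filter (fun B : Finset (Fin s) => B.Nonempty), TA B b|
          ≤ ∑ b ∈ S, |∑ B ∈ Finset.univ.filter (fun B : Finset (Fin s) => B.Nonempty), TA B b| :=
            Finset.abs_sum_le_sum_abs _ _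
        _ ≤ ∑ _b ∈ S, μ := Finset.sum_le_sum fun b _ => hT b
        _ = (S.card : ℝ) * μ := by rw [Finset.sum_const, nsmul_eq_mul]
    rw [hsplit, abs_mul, abs_of_nonneg (by positivity : (0:ℝ) ≤ (S.card : ℝ))] at hbound
    have hc : (0:ℝ) < (S.card : ℝ) := by exact_mod_cast hScard
    exact le_of_mul_le_mul_left hbound hc
  -- Main induction
  intro A
  induction A using Finset.strongInduction with
  | _ A ih =>
    intro hA a
    have hAmem : A ∈ A.powerset.filter (fun B => B.Nonempty) := by
      simp [Finset.mem_powerset, hA]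
    have hdecomp : TA A a
        = (∑ B ∈ A.powerset.filter (fun B => B.Nonempty), TA B a)
          - ∑ B ∈ (A.powerset.filter (fun B => B.Nonempty)).erase A, TA B a := by
      rw [← Finset.add_sum_erase _ _ hAmem]
      ring
    set x : ℝ := (A.card : ℝ) - 1 with hx
    have hx0 : 0 ≤ x := by
      have : 1 ≤ A.card := Finset.card_pos.mpr hA
      simp only [hx, sub_nonneg]
      exact_mod_cast this
    have hbd : ∀ B ∈ (A.powerset.filter (fun B => B.Nonempty)).erase A,
        |TA B a| ≤ μ * x ^ B.card := by
      intro B hB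
      simp only [Finset.mem_erase, Finset.mem_filter, Finset.mem_powerset] at hB
      obtain ⟨hBne, hBA, hBnonempty⟩ := hB
      have hlt : B.card < A.card := Finset.card_lt_card (lt_of_le_of_ne hBA hBne)
      have hBx : (B.card : ℝ) ≤ x := by
        simp only [hx, le_sub_iff_add_le]
        exact_mod_cast hlt
      have h1 : |TA B a| ≤ μ * (B.card : ℝ) ^ (B.card : ℕ) :=
        ih B (Finset.ssubset_iff_subset_ne.mpr ⟨hBA, hBne⟩) hBnonempty a
      refine h1.trans (mul_le_mul_of_nonneg_left ?_ hμ)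
      exact pow_le_pow_left₀ (by positivity) hBx _
    have hsum : ∑ B ∈ A.powerset, x ^ B.card = (A.card : ℝ) ^ A.card := by
      rw [binom_aux, hx]
      ring_nf
    calc |TA A a|
        ≤ |∑ B ∈ A.powerset.filter (fun B => B.Nonempty), TA B a|
          + |∑ B ∈ (A.powerset.filter (fun B => B.Nonempty)).erase A, TA B a| := by
          rw [hdecomp]; exact abs_sub _ _
      _ ≤ μ + ∑ B ∈ (A.powerset.filter (fun B => B.Nonempty)).erase A, μ * x ^ B.card := by
          refine add_le_add (key A a) ?_
          exact (Finset.abs_sum_le_sum_abs _ _).trans (Finset.sum_le_sum hbd)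
      _ = μ * (1 + ∑ B ∈ (A.powerset.filter (fun B => B.Nonempty)).erase A, x ^ B.card) := by
          rw [mul_add, mul_one, Finset.mul_sum]
      _ ≤ μ * ∑ B ∈ A.powerset, x ^ B.card := by
          refine mul_le_mul_of_nonneg_left ?_ hμ
          have hsubset : (A.powerset.filter (fun B => B.Nonempty)).erase A ⊆ A.powerset :=
            (Finset.erase_subset _ _).trans (Finset.filter_subset _ _)
          have hemp : (∅ : Finset (Fin s)) ∈ A.powerset := Finset.empty_mem_powerset A
          have hne : (∅ : Finset (Fin s)) ∉ (A.powerset.filter (fun B => B.Nonempty)).erase A := by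
            simp [Finset.not_nonempty_empty]
          calc 1 + ∑ B ∈ (A.powerset.filter (fun B => B.Nonempty)).erase A, x ^ B.card
              = ∑ B ∈ insert ∅ ((A.powerset.filter (fun B => B.Nonempty)).erase A), x ^ B.card := by
                rw [Finset.sum_insert hne]; simp
            _ ≤ ∑ B ∈ A.powerset, x ^ B.card := by
                refine Finset.sum_le_sum_of_subset_of_nonneg ?_ fun B _ _ => by positivity
                exact Finset.insert_subset hemp hsubset
      _ = μ * (A.card : ℝ) ^ (A.card : ℕ) := by rw [hsum]
end

section
/- Let s ≥ 1, let T^{[s]} be a centered tensor (all fibers sum to zero) with some entry of absolute value at least κ > 0, and for every nonempty proper subset A ⊊ [s] let T^A be an arbitrary centered tensor. Define T(a₁,…,a_s) = ∑_{∅≠A⊆[s]} T^A((a_i)_{i∈A}). Then some entry of T has absolute value at least κ/s^s. -/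
open Finset

theorem stmt_13 (s : ℕ) (hs : 0 < s) (d : Fin s → ℕ) (hd : ∀ i, 0 < d i)
    (TA : Finset (Fin s) → (∀ i : Fin s, Fin (d i)) → ℝ) (κ : ℝ) (hκ : 0 < κ)
    (hdep : ∀ (A : Finset (Fin s)) (a b : ∀ i : Fin s, Fin (d i)),
      (∀ i ∈ A, a i = b i) → TA A a = TA A b)
    (hcent : ∀ (A : Finset (Fin s)), ∀ i ∈ A, ∀ a : ∀ j : Fin s, Fin (d j),
      ∑ x : Fin (d i), TA A (Function.update a i x) = 0)
    (hbig : ∃ a : ∀ i : Fin s, Fin (d i), κ ≤ |TA Finset.univ a|) :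
    ∃ a : ∀ i : Fin s, Fin (d i),
      κ / (s : ℝ) ^ s ≤
        |∑ A ∈ Finset.univ.filter (fun A : Finset (Fin s) => A.Nonempty), TA A a| := by
  classical
  obtain ⟨a0, ha0⟩ := hbig
  haveI : ∀ i, Nonempty (Fin (d i)) := fun i => ⟨⟨0, hd i⟩⟩
  haveI : Nonempty (Fin s) := ⟨⟨0, hs⟩⟩
  set T : (∀ i, Fin (d i)) → ℝ :=
    fun a => ∑ A ∈ Finset.univ.filter (fun A : Finset (Fin s) => A.Nonempty), TA A a with hTdef
  obtain ⟨am, -, ham⟩ := Finset.exists_max_image (Finset.univ : Finset (∀ i, Fin (d i)))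
    (fun a => |T a|) Finset.univ_nonempty
  set M := |T am| with hMdef
  have hMb : ∀ a, |T a| ≤ M := fun a => ham a (mem_univ a)
  refine ⟨am, ?_⟩
  show κ / (s : ℝ) ^ s ≤ M
  rcases eq_or_lt_of_le (Nat.one_le_iff_ne_zero.mpr hs.ne') with h1 | h2
  · -- case s = 1
    obtain rfl : s = 1 := h1.symm
    have hfil : (Finset.univ.filter (fun A : Finset (Fin 1) => A.Nonempty)) = {Finset.univ} := by
      ext B
      simp only [mem_filter, mem_univ, true_and, mem_singleton]
      constructor
      · rintro ⟨x, hx⟩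
        apply Finset.eq_univ_iff_forall.mpr
        intro i
        rwa [Subsingleton.elim i x]
      · rintro rfl; exact Finset.univ_nonempty
    have : T a0 = TA Finset.univ a0 := by simp [hTdef, hfil]
    have hκM : κ ≤ M := le_trans (by rw [← this] at ha0; exact ha0) (hMb a0)
    calc κ / ((1 : ℕ) : ℝ) ^ 1 = κ := by norm_num
      _ ≤ M := hκM
  · -- case 2 ≤ s
    set N : ℕ := Fintype.card (∀ j, Fin (d j)) with hNdef
    have hNpos : 0 < (N : ℝ) := by
      have : 0 < N := Fintype.card_pos
      exact_mod_cast this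
    set mg : Finset (Fin s) → (∀ j, Fin (d j)) → (∀ j, Fin (d j)) :=
      fun B b j => if j ∈ B then b j else a0 j with hmg
    -- vanishing lemma
    have vanish : ∀ (A B : Finset (Fin s)) (i : Fin s), i ∈ A → i ∈ B →
        ∑ b : ∀ j, Fin (d j), TA A (mg B b) = 0 := by
      intro A B i hiA hiB
      rw [← Equiv.sum_comp (Equiv.piSplitAt i fun j => Fin (d j)).symm
        (fun b => TA A (mg B b)), Fintype.sum_prod_type_right]
      refine Finset.sum_eq_zero fun r _ => ?_
      set c : ∀ j, Fin (d j) :=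
        mg B ((Equiv.piSplitAt i fun j => Fin (d j)).symm (⟨0, hd i⟩, r)) with hc
      have key : ∀ x : Fin (d i),
          mg B ((Equiv.piSplitAt i fun j => Fin (d j)).symm (x, r)) = Function.update c i x := by
        intro x
        funext j
        by_cases hj : j = i
        · subst hj
          simp [hc, hmg, hiB, Equiv.piSplitAt]
        · rw [Function.update_of_ne hj]
          simp [hc, hmg, Equiv.piSplitAt, hj]
      calc ∑ x : Fin (d i), TA A (mg B ((Equiv.piSplitAt i fun j => Fin (d j)).symm (x, r)))
          = ∑ x : Fin (d i), TA A (Function.update c i x) := by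
            refine Finset.sum_congr rfl fun x _ => ?_; rw [key x]
        _ = 0 := hcent A i hiA c
    -- independence lemma
    have indep : ∀ (A B : Finset (Fin s)), (∀ i ∈ A, i ∉ B) → ∀ b, TA A (mg B b) = TA A a0 := by
      intro A B h b
      exact hdep A (mg B b) a0 fun i hi => by simp [hmg, h i hi]
    -- per-A identity
    have perA : ∀ A ∈ Finset.univ.filter (fun A : Finset (Fin s) => A.Nonempty),
        ∑ B : Finset (Fin s), (-1 : ℝ) ^ B.card * ∑ b : ∀ j, Fin (d j), TA A (mg B b)
          = if A = Finset.univ then (N : ℝ) * TA Finset.univ a0 else 0 := by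
      intro A hA
      have h1 : ∀ B ∈ (Finset.univ : Finset (Finset (Fin s))), B ∉ Aᶜ.powerset →
          (-1 : ℝ) ^ B.card * ∑ b : ∀ j, Fin (d j), TA A (mg B b) = 0 := by
        intro B _ hB
        rw [mem_powerset] at hB
        obtain ⟨i, hiB, hiA⟩ : ∃ i ∈ B, i ∈ A := by
          by_contra h
          push_neg at h
          exact hB fun j hj => Finset.mem_compl.2 (h j hj)
        rw [vanish A B i hiA hiB, mul_zero]
      rw [← Finset.sum_subset (Finset.subset_univ Aᶜ.powerset) h1]
      have h2 : ∀ B ∈ Aᶜ.powerset,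
          (-1 : ℝ) ^ B.card * ∑ b : ∀ j, Fin (d j), TA A (mg B b)
            = (-1 : ℝ) ^ B.card * ((N : ℝ) * TA A a0) := by
        intro B hB
        rw [mem_powerset] at hB
        have hdisj : ∀ i ∈ A, i ∉ B := fun i hi hiB => by
          have := hB hiB
          exact (Finset.mem_compl.1 this) hi
        congr 1
        rw [Finset.sum_congr rfl fun b _ => indep A B hdisj b, Finset.sum_const,
          Finset.card_univ, ← hNdef, nsmul_eq_mul]
      have hpow : (∑ B ∈ Aᶜ.powerset, (-1 : ℝ) ^ B.card)
          = if Aᶜ = ∅ then (1 : ℝ) else 0 := by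
        have hz := Finset.sum_powerset_neg_one_pow_card (x := Aᶜ)
        have : (∑ B ∈ Aᶜ.powerset, (-1 : ℝ) ^ B.card)
            = ((∑ B ∈ Aᶜ.powerset, (-1 : ℤ) ^ B.card : ℤ) : ℝ) := by push_cast; rfl
        rw [this, hz]
        split_ifs <;> norm_num
      rw [Finset.sum_congr rfl h2, ← Finset.sum_mul, hpow]
      by_cases hAu : A = Finset.univ
      · simp [hAu, Finset.compl_eq_empty_iff]
      · have : Aᶜ ≠ ∅ := fun h => hAu ((Finset.compl_eq_empty_iff A).1 h)
        simp [hAu, this]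
    -- global identity
    have main : ∑ B : Finset (Fin s), (-1 : ℝ) ^ B.card * ∑ b : ∀ j, Fin (d j), T (mg B b)
        = (N : ℝ) * TA Finset.univ a0 := by
      have huniv : Finset.univ ∈ Finset.univ.filter (fun A : Finset (Fin s) => A.Nonempty) := by
        simp [Finset.univ_nonempty]
      calc ∑ B : Finset (Fin s), (-1 : ℝ) ^ B.card * ∑ b : ∀ j, Fin (d j), T (mg B b)
          = ∑ B : Finset (Fin s), ∑ A ∈ Finset.univ.filter (fun A : Finset (Fin s) => A.Nonempty),
              (-1 : ℝ) ^ B.card * ∑ b : ∀ j, Fin (d j), TA A (mg B b) := by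
            refine Finset.sum_congr rfl fun B _ => ?_
            rw [← Finset.mul_sum]
            congr 1
            rw [Finset.sum_comm]
        _ = ∑ A ∈ Finset.univ.filter (fun A : Finset (Fin s) => A.Nonempty),
              ∑ B : Finset (Fin s),
              (-1 : ℝ) ^ B.card * ∑ b : ∀ j, Fin (d j), TA A (mg B b) := Finset.sum_comm
        _ = ∑ A ∈ Finset.univ.filter (fun A : Finset (Fin s) => A.Nonempty),
              (if A = Finset.univ then (N : ℝ) * TA Finset.univ a0 else 0) :=
            Finset.sum_congr rfl perA
        _ = (N : ℝ) * TA Finset.univ a0 := by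
            rw [Finset.sum_ite_eq' _ Finset.univ (fun _ => (N : ℝ) * TA Finset.univ a0),
              if_pos huniv]
    -- bound
    have hbound : (N : ℝ) * κ ≤ (2 : ℝ) ^ s * ((N : ℝ) * M) := by
      calc (N : ℝ) * κ ≤ (N : ℝ) * |TA Finset.univ a0| :=
            mul_le_mul_of_nonneg_left ha0 hNpos.le
        _ = |(N : ℝ) * TA Finset.univ a0| := by
            rw [abs_mul, abs_of_nonneg hNpos.le]
        _ = |∑ B : Finset (Fin s), (-1 : ℝ) ^ B.card * ∑ b : ∀ j, Fin (d j), T (mg B b)| := by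
            rw [main]
        _ ≤ ∑ B : Finset (Fin s), |(-1 : ℝ) ^ B.card * ∑ b : ∀ j, Fin (d j), T (mg B b)| :=
            Finset.abs_sum_le_sum_abs _ _
        _ ≤ ∑ _B : Finset (Fin s), (N : ℝ) * M := by
            refine Finset.sum_le_sum fun B _ => ?_
            rw [abs_mul, abs_pow, abs_neg, abs_one, one_pow, one_mul]
            calc |∑ b : ∀ j, Fin (d j), T (mg B b)|
                ≤ ∑ b : ∀ j, Fin (d j), |T (mg B b)| := Finset.abs_sum_le_sum_abs _ _
              _ ≤ ∑ _b : ∀ j, Fin (d j), M := Finset.sum_le_sum fun b _ => hMb _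
              _ = (N : ℝ) * M := by
                  rw [Finset.sum_const, Finset.card_univ, ← hNdef, nsmul_eq_mul]
        _ = (2 : ℝ) ^ s * ((N : ℝ) * M) := by
            rw [Finset.sum_const, Finset.card_univ, Fintype.card_finset, Fintype.card_fin,
              nsmul_eq_mul]
            push_cast
            ring
    have hκ2 : κ ≤ (2 : ℝ) ^ s * M := by
      have h' : (N : ℝ) * κ ≤ (N : ℝ) * ((2 : ℝ) ^ s * M) := by
        calc (N : ℝ) * κ ≤ (2 : ℝ) ^ s * ((N : ℝ) * M) := hbound
          _ = (N : ℝ) * ((2 : ℝ) ^ s * M) := by ring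
      exact le_of_mul_le_mul_left h' hNpos
    have h2s : (2 : ℝ) ^ s ≤ (s : ℝ) ^ s := by
      have : (2 : ℕ) ^ s ≤ s ^ s := Nat.pow_le_pow_left h2 s
      exact_mod_cast this
    have hspos : (0 : ℝ) < (s : ℝ) ^ s := by positivity
    have h2pos : (0 : ℝ) < (2 : ℝ) ^ s := by positivity
    calc κ / (s : ℝ) ^ s ≤ κ / (2 : ℝ) ^ s :=
          div_le_div_of_nonneg_left hκ.le h2pos h2s
      _ ≤ M := (div_le_iff₀ h2pos).2 (by linarith [hκ2])
end
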